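/- Let P be a hereditary property of ordered graphs such that every graph in P has maximum degree at most 1, and suppose that for every constant c > 0 there exists N ∈ ℕ with |P_N| > c^N. Then for every k ∈ ℕ and every permutation π of [k], the ordered graph H(π) belongs to P_{2k}, and consequently |P_n| ≥ Σ_{k=0}^{⌊n/2⌋} C(n,2k)·k! for every n ∈ ℕ. -/

import Mathlib

/-- The element `i ∈ [k]` viewed as an element of `[2k]` (the left half). -/
def finL (k : ℕ) (i : Fin k) : Fin (2 * k) := ⟨i.1, by have := i.isLt; omega⟩

/-- The element `π(i) + k` viewed as an element of `[2k]` (the right half). -/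
def finR (k : ℕ) (i : Fin k) : Fin (2 * k) := ⟨k + i.1, by have := i.isLt; omega⟩

/-- The ordered graph `H(π)` on `[2k]` whose edges are the pairs `{i, π(i)+k}` for `i ∈ [k]`. -/
def HpermGraph (k : ℕ) (π : Equiv.Perm (Fin k)) : SimpleGraph (Fin (2 * k)) :=
  SimpleGraph.fromEdgeSet {e | ∃ i : Fin k, e = s(finL k i, finR k (π i))}

/-- The ordered graph on `[|U|]` obtained from the induced subgraph of `G` on `U ⊆ [n]`
via the unique order isomorphism `[|U|] → U`. -/
def inducedOG {n : ℕ} (G : SimpleGraph (Fin n)) (U : Finset (Fin n)) :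
    SimpleGraph (Fin U.card) :=
  SimpleGraph.comap (fun i : Fin U.card => U.orderEmbOfFin rfl i) G

open Finset

set_option maxHeartbeats 1000000

open scoped Classical

noncomputable section

/-- A split copy of the permutation `π` in an ordered graph `G`. -/
def SplitCopy {k n : ℕ} (π : Equiv.Perm (Fin k)) (G : SimpleGraph (Fin n))
    (L R : Fin k → Fin n) : Prop :=
  StrictMono L ∧ StrictMono R ∧ (∀ i j, L i < R j) ∧ ∀ i, G.Adj (L i) (R (π i))

def SplitFree {k n : ℕ} (π : Equiv.Perm (Fin k)) (G : SimpleGraph (Fin n)) : Prop :=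
  ∀ L R, ¬ SplitCopy π G L R

/-- The set of edges of `G`, as ordered pairs. -/
def ep {n : ℕ} (G : SimpleGraph (Fin n)) : Finset (Fin n × Fin n) :=
  Finset.univ.filter fun p => p.1 < p.2 ∧ G.Adj p.1 p.2

lemma mem_ep {n : ℕ} {G : SimpleGraph (Fin n)} {p : Fin n × Fin n} :
    p ∈ ep G ↔ p.1 < p.2 ∧ G.Adj p.1 p.2 := by simp [ep]

lemma ep_card_le {n : ℕ} (G : SimpleGraph (Fin n)) : (ep G).card ≤ n * n := by
  calc (ep G).card ≤ (univ : Finset (Fin n × Fin n)).card := Finset.card_filter_le _ _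
  _ = n * n := by simp

/-- block map: `v ↦ v / s`. -/
def bmap (s n : ℕ) (v : Fin n) : Fin (n / s + 1) :=
  ⟨v.1 / s, Nat.lt_succ_of_le (Nat.div_le_div_right v.2.le)⟩

lemma bmap_mono {s n : ℕ} {a b : Fin n} (h : a ≤ b) : bmap s n a ≤ bmap s n b :=
  Nat.div_le_div_right h

lemma lt_of_bmap_lt {s n : ℕ} {a b : Fin n} (h : bmap s n a < bmap s n b) : a < b := by
  by_contra hc
  exact absurd (bmap_mono (not_lt.mp hc)) (not_le.mpr h)

/-- the block graph. -/
def bgraph {n : ℕ} (s : ℕ) (G : SimpleGraph (Fin n)) : SimpleGraph (Fin (n / s + 1)) where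
  Adj u v := u ≠ v ∧ ∃ a b, G.Adj a b ∧ bmap s n a = u ∧ bmap s n b = v
  symm := by
    constructor
    rintro u v ⟨h, a, b, hab, ha, hb⟩
    exact ⟨h.symm, b, a, hab.symm, hb, ha⟩
  loopless := ⟨fun u h => h.1 rfl⟩

lemma splitFree_bgraph {k n s : ℕ} {π : Equiv.Perm (Fin k)} {G : SimpleGraph (Fin n)}
    (hG : SplitFree π G) : SplitFree π (bgraph s G) := by
  rintro L R ⟨hL, hR, hLR, hadj⟩
  choose a b hab ha hb using fun i => (show _ ≠ _ ∧ ∃ a b, G.Adj a b ∧ bmap s n a = _ ∧ bmap s n b = _ from hadj i).2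
  refine hG a (fun j => b (π.symm j)) ⟨?_, ?_, ?_, ?_⟩
  · intro i j hij
    exact lt_of_bmap_lt (s := s) (by rw [ha i, ha j]; exact hL hij)
  · intro i j hij
    refine lt_of_bmap_lt (s := s) ?_
    rw [hb (π.symm i), hb (π.symm j)]
    simpa using hR hij
  · intro i j
    refine lt_of_bmap_lt (s := s) ?_
    rw [ha i, hb (π.symm j)]
    simpa using hLR i j
  · intro i
    simpa using hab i

/-- the block of `u`. -/
def blk {n : ℕ} (s : ℕ) (u : Fin (n / s + 1)) : Finset (Fin n) :=
  Finset.univ.filter fun v => bmap s n v = u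

lemma mem_blk {n s : ℕ} {u : Fin (n / s + 1)} {v : Fin n} :
    v ∈ blk s u ↔ bmap s n v = u := by simp [blk]

lemma blk_card_le {n : ℕ} {s : ℕ} (hs : 0 < s) (u : Fin (n / s + 1)) :
    (blk s u).card ≤ s := by
  have h : (blk s u).card ≤ (univ : Finset (Fin s)).card := by
    apply Finset.card_le_card_of_injOn (fun v => ⟨v.1 % s, Nat.mod_lt _ hs⟩)
    · intro v _; exact Finset.mem_univ _
    · intro v hv w hw hvw
      rw [Finset.mem_coe, mem_blk] at hv hw
      have h1 : v.1 / s = u.1 := congrArg Fin.val hv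
      have h2 : w.1 / s = u.1 := congrArg Fin.val hw
      simp only [Fin.mk.injEq] at hvw
      have h4 : v.1 / s = w.1 / s := by rw [h1, h2]
      refine Fin.ext ?_
      rw [← Nat.div_add_mod v.1 s, ← Nat.div_add_mod w.1 s, h4, hvw]
  simpa using h


/-- the fiber of edge pairs over a block pair. -/
def fib {n : ℕ} (s : ℕ) (G : SimpleGraph (Fin n)) (q : Fin (n/s+1) × Fin (n/s+1)) :
    Finset (Fin n × Fin n) :=
  (ep G).filter fun p => (bmap s n p.1, bmap s n p.2) = q

lemma mem_fib {n s : ℕ} {G : SimpleGraph (Fin n)} {q} {p : Fin n × Fin n} :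
    p ∈ fib s G q ↔ p ∈ ep G ∧ bmap s n p.1 = q.1 ∧ bmap s n p.2 = q.2 := by
  simp [fib, Prod.ext_iff]

def LsetF {n : ℕ} (s : ℕ) (G : SimpleGraph (Fin n)) (q : Fin (n/s+1) × Fin (n/s+1)) :
    Finset (Fin n) := (fib s G q).image Prod.fst

def RsetF {n : ℕ} (s : ℕ) (G : SimpleGraph (Fin n)) (q : Fin (n/s+1) × Fin (n/s+1)) :
    Finset (Fin n) := (fib s G q).image Prod.snd

lemma LsetF_subset_blk {n s : ℕ} {G : SimpleGraph (Fin n)} {q} :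
    LsetF s G q ⊆ blk s q.1 := by
  intro x hx
  simp only [LsetF, mem_image] at hx
  obtain ⟨p, hp, rfl⟩ := hx
  rw [mem_fib] at hp
  exact mem_blk.mpr hp.2.1

lemma RsetF_subset_blk {n s : ℕ} {G : SimpleGraph (Fin n)} {q} :
    RsetF s G q ⊆ blk s q.2 := by
  intro x hx
  simp only [RsetF, mem_image] at hx
  obtain ⟨p, hp, rfl⟩ := hx
  rw [mem_fib] at hp
  exact mem_blk.mpr hp.2.2

lemma wideL_bound {k n s : ℕ} (hs : 0 < s) {π : Equiv.Perm (Fin k)}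
    {G : SimpleGraph (Fin n)} (hG : SplitFree π G) (hk : 0 < k) (u : Fin (n/s+1)) :
    ((univ : Finset (Fin (n/s+1))).filter
        fun v => u < v ∧ k ≤ (LsetF s G (u, v)).card).card ≤ Nat.choose s k * (k-1) := by
  by_contra hcon
  push_neg at hcon
  set W := (univ : Finset (Fin (n/s+1))).filter
      (fun v => u < v ∧ k ≤ (LsetF s G (u, v)).card) with hW
  -- choice of a k-subset of the left set
  have hgex : ∀ v ∈ W, ∃ t ⊆ LsetF s G (u, v), t.card = k := by
    intro v hv
    rw [hW, mem_filter] at hv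
    exact Finset.exists_subset_card_eq hv.2.2
  choose! g hg1 hg2 using hgex
  have hmaps : ∀ v ∈ W, g v ∈ (blk s u).powersetCard k := by
    intro v hv
    rw [Finset.mem_powersetCard]
    exact ⟨(hg1 v hv).trans (LsetF_subset_blk (q := (u,v))), hg2 v hv⟩
  have hlt : ((blk s u).powersetCard k).card * (k-1) < W.card := by
    calc ((blk s u).powersetCard k).card * (k-1)
        ≤ Nat.choose s k * (k-1) := by
          apply Nat.mul_le_mul_right
          rw [Finset.card_powersetCard]
          exact Nat.choose_le_choose k (blk_card_le hs u)
      _ < W.card := hcon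
  obtain ⟨S, hSmem, hSfib⟩ := Finset.exists_lt_card_fiber_of_mul_lt_card_of_maps_to hmaps hlt
  have hScard : S.card = k := (Finset.mem_powersetCard.mp hSmem).2
  have hSblk : S ⊆ blk s u := (Finset.mem_powersetCard.mp hSmem).1
  obtain ⟨Vs, hVsub, hVcard⟩ :=
    Finset.exists_subset_card_eq (show k ≤ (W.filter (fun x => g x = S)).card by omega)
  set vfun := Vs.orderEmbOfFin hVcard with hvfun
  set sfun := S.orderEmbOfFin hScard with hsfun
  have hvprop : ∀ i : Fin k, u < vfun i ∧ g (vfun i) = S := by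
    intro i
    have := hVsub (Vs.orderEmbOfFin_mem hVcard i)
    rw [mem_filter] at this
    obtain ⟨hWv, hgv⟩ := this
    rw [hW, mem_filter] at hWv
    exact ⟨hWv.2.1, hgv⟩
  have hy : ∀ i : Fin k, ∃ y, ((sfun i, y) ∈ ep G ∧ bmap s n y = vfun (π i)) := by
    intro i
    have hmem : sfun i ∈ LsetF s G (u, vfun (π i)) := by
      apply hg1 _ (?memW)
      case memW =>
        have := hVsub (Vs.orderEmbOfFin_mem hVcard (π i))
        exact (Finset.mem_filter.mp this).1
      rw [(hvprop (π i)).2]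
      exact S.orderEmbOfFin_mem hScard i
    simp only [LsetF, mem_image] at hmem
    obtain ⟨p, hp, hp1⟩ := hmem
    rw [mem_fib] at hp
    refine ⟨p.2, ?_, hp.2.2⟩
    rw [← hp1]
    simpa [Prod.mk.eta] using hp.1
  choose y hy1 hy2 using hy
  apply hG sfun (fun j => y (π.symm j))
  refine ⟨(S.orderEmbOfFin hScard).strictMono, ?_, ?_, ?_⟩
  · intro i j hij
    apply lt_of_bmap_lt (s := s)
    rw [hy2 (π.symm i), hy2 (π.symm j)]
    simp only [Equiv.apply_symm_apply]
    exact (Vs.orderEmbOfFin hVcard).strictMono hij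
  · intro i j
    apply lt_of_bmap_lt (s := s)
    have h1 : bmap s n (sfun i) = u := mem_blk.mp (hSblk (S.orderEmbOfFin_mem hScard i))
    rw [h1, hy2 (π.symm j)]
    simp only [Equiv.apply_symm_apply]
    exact (hvprop j).1
  · intro i
    have := hy1 i
    rw [mem_ep] at this
    simpa using this.2

lemma wideR_bound {k n s : ℕ} (hs : 0 < s) {π : Equiv.Perm (Fin k)}
    {G : SimpleGraph (Fin n)} (hG : SplitFree π G) (hk : 0 < k) (v : Fin (n/s+1)) :
    ((univ : Finset (Fin (n/s+1))).filter
        fun u => u < v ∧ k ≤ (RsetF s G (u, v)).card).card ≤ Nat.choose s k * (k-1) := by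
  by_contra hcon
  push_neg at hcon
  set W := (univ : Finset (Fin (n/s+1))).filter
      (fun u => u < v ∧ k ≤ (RsetF s G (u, v)).card) with hW
  have hgex : ∀ u ∈ W, ∃ t ⊆ RsetF s G (u, v), t.card = k := by
    intro u hu
    rw [hW, mem_filter] at hu
    exact Finset.exists_subset_card_eq hu.2.2
  choose! g hg1 hg2 using hgex
  have hmaps : ∀ u ∈ W, g u ∈ (blk s v).powersetCard k := by
    intro u hu
    rw [Finset.mem_powersetCard]
    exact ⟨(hg1 u hu).trans (RsetF_subset_blk (q := (u,v))), hg2 u hu⟩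
  have hlt : ((blk s v).powersetCard k).card * (k-1) < W.card := by
    calc ((blk s v).powersetCard k).card * (k-1)
        ≤ Nat.choose s k * (k-1) := by
          apply Nat.mul_le_mul_right
          rw [Finset.card_powersetCard]
          exact Nat.choose_le_choose k (blk_card_le hs v)
      _ < W.card := hcon
  obtain ⟨S, hSmem, hSfib⟩ := Finset.exists_lt_card_fiber_of_mul_lt_card_of_maps_to hmaps hlt
  have hScard : S.card = k := (Finset.mem_powersetCard.mp hSmem).2
  have hSblk : S ⊆ blk s v := (Finset.mem_powersetCard.mp hSmem).1
  obtain ⟨Us, hUsub, hUcard⟩ :=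
    Finset.exists_subset_card_eq (show k ≤ (W.filter (fun x => g x = S)).card by omega)
  set ufun := Us.orderEmbOfFin hUcard with hufun
  set sfun := S.orderEmbOfFin hScard with hsfun
  have huprop : ∀ i : Fin k, ufun i < v ∧ g (ufun i) = S := by
    intro i
    have := hUsub (Us.orderEmbOfFin_mem hUcard i)
    rw [mem_filter] at this
    obtain ⟨hWu, hgu⟩ := this
    rw [hW, mem_filter] at hWu
    exact ⟨hWu.2.1, hgu⟩
  have hx : ∀ i : Fin k, ∃ x, ((x, sfun (π i)) ∈ ep G ∧ bmap s n x = ufun i) := by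
    intro i
    have hmem : sfun (π i) ∈ RsetF s G (ufun i, v) := by
      apply hg1 _ (?memW)
      case memW =>
        have := hUsub (Us.orderEmbOfFin_mem hUcard i)
        exact (Finset.mem_filter.mp this).1
      rw [(huprop i).2]
      exact S.orderEmbOfFin_mem hScard (π i)
    simp only [RsetF, mem_image] at hmem
    obtain ⟨p, hp, hp2⟩ := hmem
    rw [mem_fib] at hp
    refine ⟨p.1, ?_, hp.2.1⟩
    rw [← hp2]
    simpa [Prod.mk.eta] using hp.1
  choose x hx1 hx2 using hx
  apply hG x sfun
  refine ⟨?_, (S.orderEmbOfFin hScard).strictMono, ?_, ?_⟩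
  · intro i j hij
    apply lt_of_bmap_lt (s := s)
    rw [hx2 i, hx2 j]
    exact (Us.orderEmbOfFin hUcard).strictMono hij
  · intro i j
    apply lt_of_bmap_lt (s := s)
    have h1 : bmap s n (sfun j) = v := mem_blk.mp (hSblk (S.orderEmbOfFin_mem hScard j))
    rw [hx2 i, h1]
    exact (huprop i).1
  · intro i
    have := hx1 i
    rw [mem_ep] at this
    simpa using this.2

lemma sum_union_le' {α : Type*} [DecidableEq α] (s t : Finset α) (f : α → ℕ) :
    ∑ x ∈ s ∪ t, f x ≤ (∑ x ∈ s, f x) + ∑ x ∈ t, f x := by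
  have := Finset.sum_union_inter (s₁ := s) (s₂ := t) (f := f)
  omega

lemma fib_card_le {n s : ℕ} (hs : 0 < s) (G : SimpleGraph (Fin n)) (q) :
    (fib s G q).card ≤ s * s := by
  have hsub : fib s G q ⊆ (blk s q.1) ×ˢ (blk s q.2) := by
    intro p hp
    rw [mem_fib] at hp
    exact Finset.mem_product.mpr ⟨mem_blk.mpr hp.2.1, mem_blk.mpr hp.2.2⟩
  calc (fib s G q).card ≤ _ := Finset.card_le_card hsub
    _ = (blk s q.1).card * (blk s q.2).card := Finset.card_product _ _
    _ ≤ s * s := Nat.mul_le_mul (blk_card_le hs _) (blk_card_le hs _)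

lemma fib_card_le_narrow {n s k : ℕ} (G : SimpleGraph (Fin n)) (q)
    (h1 : (LsetF s G q).card ≤ k - 1) (h2 : (RsetF s G q).card ≤ k - 1) :
    (fib s G q).card ≤ (k-1) * (k-1) := by
  have hsub : fib s G q ⊆ (LsetF s G q) ×ˢ (RsetF s G q) := by
    intro p hp
    refine Finset.mem_product.mpr ⟨?_, ?_⟩
    · exact Finset.mem_image_of_mem Prod.fst hp
    · exact Finset.mem_image_of_mem Prod.snd hp
  calc (fib s G q).card ≤ _ := Finset.card_le_card hsub
    _ = (LsetF s G q).card * (RsetF s G q).card := Finset.card_product _ _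
    _ ≤ (k-1) * (k-1) := Nat.mul_le_mul h1 h2

theorem extremal {k : ℕ} (π : Equiv.Perm (Fin k)) (hk : 0 < k) (s A : ℕ)
    (hs : s = 4 * k ^ 2)
    (hA : A = 5 * s + 8 * (k - 1) * (Nat.choose s k) * s) :
    ∀ n (G : SimpleGraph (Fin n)), SplitFree π G → (ep G).card ≤ A * n := by
  have hs0 : 0 < s := by rw [hs]; positivity
  have hsA : s ≤ A := by
    have : s ≤ 5 * s := by omega
    calc s ≤ 5 * s := this
      _ ≤ A := by rw [hA]; exact Nat.le_add_right _ _
  intro n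
  induction n using Nat.strong_induction_on with
  | _ n IH =>
  intro G hG
  by_cases hns : n < s
  · calc (ep G).card ≤ n * n := ep_card_le G
      _ ≤ A * n := Nat.mul_le_mul_right n (by omega)
  push_neg at hns
  have hk4 : 4 ≤ s := by rw [hs]; nlinarith
  have hmlt : n / s + 1 < n := by
    have h1 : n / s ≤ n / 4 := Nat.div_le_div_left hk4 (by omega)
    have h2 : n / 4 + 1 < n := by omega
    omega
  -- the block graph
  have hH : SplitFree π (bgraph s G) := splitFree_bgraph hG
  have hHcard : (ep (bgraph s G)).card ≤ A * (n / s + 1) := IH _ hmlt _ hH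
  -- fiberwise decomposition
  have hdecomp : (ep G).card =
      ∑ q ∈ (univ : Finset (Fin (n/s+1) × Fin (n/s+1))), (fib s G q).card := by
    rw [Finset.card_eq_sum_card_fiberwise
      (f := fun p : Fin n × Fin n => (bmap s n p.1, bmap s n p.2)) (t := univ)
      (fun p _ => mem_univ _)]
    exact Finset.sum_congr rfl fun q _ => by rw [fib]
  -- the three classes
  set T1 : Finset (Fin (n/s+1) × Fin (n/s+1)) := univ.filter (fun q => q.1 = q.2) with hT1
  set T2 : Finset (Fin (n/s+1) × Fin (n/s+1)) :=
    (ep (bgraph s G)).filter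
      (fun q => (LsetF s G q).card ≤ k - 1 ∧ (RsetF s G q).card ≤ k - 1) with hT2
  set T3 : Finset (Fin (n/s+1) × Fin (n/s+1)) :=
    univ.filter (fun q => q.1 < q.2 ∧ (k ≤ (LsetF s G q).card ∨ k ≤ (RsetF s G q).card))
    with hT3
  have hsupp : (univ.filter fun q => (fib s G q).card ≠ 0) ⊆ T1 ∪ T2 ∪ T3 := by
    intro q hq
    rw [mem_filter] at hq
    have hne : (fib s G q).Nonempty := Finset.card_ne_zero.mp hq.2
    obtain ⟨p, hp⟩ := hne
    rw [mem_fib, mem_ep] at hp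
    obtain ⟨⟨hplt, hpadj⟩, hp1, hp2⟩ := hp
    have hle : q.1 ≤ q.2 := by
      rw [← hp1, ← hp2]; exact bmap_mono hplt.le
    rcases eq_or_lt_of_le hle with heq | hlt'
    · exact Finset.mem_union.mpr (Or.inl (Finset.mem_union.mpr (Or.inl
        (by rw [hT1, mem_filter]; exact ⟨mem_univ _, heq⟩))))
    by_cases hwide : k ≤ (LsetF s G q).card ∨ k ≤ (RsetF s G q).card
    · exact Finset.mem_union.mpr (Or.inr
        (by rw [hT3, mem_filter]; exact ⟨mem_univ _, hlt', hwide⟩))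
    · push_neg at hwide
      refine Finset.mem_union.mpr (Or.inl (Finset.mem_union.mpr (Or.inr ?_)))
      rw [hT2, mem_filter, mem_ep]
      refine ⟨⟨hlt', (show q.1 ≠ q.2 ∧ ∃ a b, G.Adj a b ∧ bmap s n a = q.1 ∧ bmap s n b = q.2 from ⟨ne_of_lt hlt', p.1, p.2, hpadj, hp1, hp2⟩)⟩, by omega, by omega⟩
  -- sum over support
  have hsum1 : (ep G).card ≤ ∑ q ∈ T1 ∪ T2 ∪ T3, (fib s G q).card := by
    rw [hdecomp]
    rw [← Finset.sum_filter_ne_zero (s := univ)]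
    exact Finset.sum_le_sum_of_subset hsupp
  have hsum2 : ∑ q ∈ T1 ∪ T2 ∪ T3, (fib s G q).card ≤
      (∑ q ∈ T1, (fib s G q).card) + (∑ q ∈ T2, (fib s G q).card)
        + (∑ q ∈ T3, (fib s G q).card) := by
    calc ∑ q ∈ T1 ∪ T2 ∪ T3, (fib s G q).card
        ≤ (∑ q ∈ T1 ∪ T2, (fib s G q).card) + (∑ q ∈ T3, (fib s G q).card) :=
          sum_union_le' _ _ _
      _ ≤ _ := by
          have := sum_union_le' T1 T2 (fun q => (fib s G q).card)
          omega
  -- bounds for each class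
  have hB1 : ∑ q ∈ T1, (fib s G q).card ≤ (n/s+1) * (s*s) := by
    have hT1card : T1.card ≤ n/s+1 := by
      have : T1.card ≤ (univ : Finset (Fin (n/s+1))).card := by
        apply Finset.card_le_card_of_injOn Prod.fst (fun q _ => mem_univ _)
        intro q hq q' hq' hqq
        rw [Finset.mem_coe, hT1, mem_filter] at hq hq'
        exact Prod.ext hqq (by rw [← hq.2, ← hq'.2, hqq])
      simpa using this
    calc ∑ q ∈ T1, (fib s G q).card ≤ T1.card • (s*s) :=
          Finset.sum_le_card_nsmul _ _ _ (fun q _ => fib_card_le hs0 G q)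
      _ = T1.card * (s*s) := by rw [smul_eq_mul]
      _ ≤ (n/s+1) * (s*s) := Nat.mul_le_mul_right _ hT1card
  have hB2 : ∑ q ∈ T2, (fib s G q).card ≤ (A * (n/s+1)) * ((k-1)*(k-1)) := by
    have hT2card : T2.card ≤ A * (n/s+1) :=
      le_trans (Finset.card_le_card (Finset.filter_subset _ _)) hHcard
    calc ∑ q ∈ T2, (fib s G q).card ≤ T2.card • ((k-1)*(k-1)) := by
          apply Finset.sum_le_card_nsmul
          intro q hq
          rw [hT2, mem_filter] at hq
          exact fib_card_le_narrow G q hq.2.1 hq.2.2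
      _ = T2.card * ((k-1)*(k-1)) := by rw [smul_eq_mul]
      _ ≤ (A * (n/s+1)) * ((k-1)*(k-1)) := Nat.mul_le_mul_right _ hT2card
  have hB3 : ∑ q ∈ T3, (fib s G q).card ≤
      (2 * ((n/s+1) * (Nat.choose s k * (k-1)))) * (s*s) := by
    have hT3card : T3.card ≤ 2 * ((n/s+1) * (Nat.choose s k * (k-1))) := by
      set T3L : Finset (Fin (n/s+1) × Fin (n/s+1)) :=
        univ.filter (fun q => q.1 < q.2 ∧ k ≤ (LsetF s G q).card) with hT3L
      set T3R : Finset (Fin (n/s+1) × Fin (n/s+1)) :=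
        univ.filter (fun q => q.1 < q.2 ∧ k ≤ (RsetF s G q).card) with hT3R
      have hsub : T3 ⊆ T3L ∪ T3R := by
        intro q hq
        rw [hT3, mem_filter] at hq
        rcases hq.2.2 with h | h
        · exact Finset.mem_union.mpr (Or.inl (by rw [hT3L, mem_filter]; exact ⟨mem_univ _, hq.2.1, h⟩))
        · exact Finset.mem_union.mpr (Or.inr (by rw [hT3R, mem_filter]; exact ⟨mem_univ _, hq.2.1, h⟩))
      have hL : T3L.card ≤ (n/s+1) * (Nat.choose s k * (k-1)) := by
        have hfib : T3L.card = ∑ u ∈ (univ : Finset (Fin (n/s+1))),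
            (T3L.filter (fun q => q.1 = u)).card :=
          Finset.card_eq_sum_card_fiberwise (fun q _ => mem_univ _)
        rw [hfib]
        have : ∀ u ∈ (univ : Finset (Fin (n/s+1))),
            (T3L.filter (fun q => q.1 = u)).card ≤ Nat.choose s k * (k-1) := by
          intro u _
          have hinj : (T3L.filter (fun q => q.1 = u)).card ≤
              ((univ : Finset (Fin (n/s+1))).filter
                (fun v => u < v ∧ k ≤ (LsetF s G (u, v)).card)).card := by
            apply Finset.card_le_card_of_injOn Prod.snd
            · intro q hq
              rw [Finset.mem_coe, mem_filter] at hq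
              obtain ⟨hqL, hq1⟩ := hq
              rw [hT3L, mem_filter] at hqL
              rw [Finset.mem_coe, mem_filter]
              have hq' : q = (u, q.2) := Prod.ext hq1 rfl
              refine ⟨mem_univ _, ?_, ?_⟩
              · rw [← hq1]; exact hqL.2.1
              · rw [← hq']; exact hqL.2.2
            · intro q hq q' hq' hqq
              rw [Finset.mem_coe, mem_filter] at hq hq'
              exact Prod.ext (by rw [hq.2, hq'.2]) hqq
          exact le_trans hinj (wideL_bound hs0 hG hk u)
        calc ∑ u ∈ (univ : Finset (Fin (n/s+1))), (T3L.filter (fun q => q.1 = u)).card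
            ≤ (univ : Finset (Fin (n/s+1))).card • (Nat.choose s k * (k-1)) :=
              Finset.sum_le_card_nsmul _ _ _ this
          _ = (n/s+1) * (Nat.choose s k * (k-1)) := by simp [smul_eq_mul]
      have hR : T3R.card ≤ (n/s+1) * (Nat.choose s k * (k-1)) := by
        have hfib : T3R.card = ∑ v ∈ (univ : Finset (Fin (n/s+1))),
            (T3R.filter (fun q => q.2 = v)).card :=
          Finset.card_eq_sum_card_fiberwise (fun q _ => mem_univ _)
        rw [hfib]
        have : ∀ v ∈ (univ : Finset (Fin (n/s+1))),
            (T3R.filter (fun q => q.2 = v)).card ≤ Nat.choose s k * (k-1) := by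
          intro v _
          have hinj : (T3R.filter (fun q => q.2 = v)).card ≤
              ((univ : Finset (Fin (n/s+1))).filter
                (fun u => u < v ∧ k ≤ (RsetF s G (u, v)).card)).card := by
            apply Finset.card_le_card_of_injOn Prod.fst
            · intro q hq
              rw [Finset.mem_coe, mem_filter] at hq
              obtain ⟨hqR, hq2⟩ := hq
              rw [hT3R, mem_filter] at hqR
              rw [Finset.mem_coe, mem_filter]
              have hq' : q = (q.1, v) := Prod.ext rfl hq2
              refine ⟨mem_univ _, ?_, ?_⟩
              · rw [← hq2]; exact hqR.2.1
              · rw [← hq']; exact hqR.2.2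
            · intro q hq q' hq' hqq
              rw [Finset.mem_coe, mem_filter] at hq hq'
              exact Prod.ext hqq (by rw [hq.2, hq'.2])
          exact le_trans hinj (wideR_bound hs0 hG hk v)
        calc ∑ v ∈ (univ : Finset (Fin (n/s+1))), (T3R.filter (fun q => q.2 = v)).card
            ≤ (univ : Finset (Fin (n/s+1))).card • (Nat.choose s k * (k-1)) :=
              Finset.sum_le_card_nsmul _ _ _ this
          _ = (n/s+1) * (Nat.choose s k * (k-1)) := by simp [smul_eq_mul]
      calc T3.card ≤ (T3L ∪ T3R).card := Finset.card_le_card hsub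
        _ ≤ T3L.card + T3R.card := Finset.card_union_le _ _
        _ ≤ 2 * ((n/s+1) * (Nat.choose s k * (k-1))) := by omega
    calc ∑ q ∈ T3, (fib s G q).card ≤ T3.card • (s*s) :=
          Finset.sum_le_card_nsmul _ _ _ (fun q _ => fib_card_le hs0 G q)
      _ = T3.card * (s*s) := by rw [smul_eq_mul]
      _ ≤ _ := Nat.mul_le_mul_right _ hT3card
  -- final arithmetic
  have hXfac : (n/s+1) * (s*s) + (A * (n/s+1)) * ((k-1)*(k-1))
      + (2 * ((n/s+1) * (Nat.choose s k * (k-1)))) * (s*s)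
      = (n/s+1) * (s*s + A*((k-1)*(k-1)) + 2*(Nat.choose s k*(k-1))*(s*s)) := by ring
  have hms : (n/s+1) * s ≤ 2 * n := by
    have h1 : (n/s) * s ≤ n := Nat.div_mul_le_self n s
    have : (n/s+1) * s = (n/s)*s + s := by ring
    omega
  have h2X : 2 * (s*s + A*((k-1)*(k-1)) + 2*(Nat.choose s k*(k-1))*(s*s)) ≤ A * s := by
    set j := k - 1 with hj
    have hkj : k = j + 1 := by omega
    set C := Nat.choose s k with hC
    have hs4 : 4 * (j*j) ≤ s := by
      rw [hs, hkj]
      have : (j+1)^2 = j*j + 2*j + 1 := by ring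
      omega
    have h3s : 10 * (j*j) ≤ 3 * s := by omega
    rw [hA]
    have e1 : 10*s*(j*j) ≤ 3*(s*s) := by
      calc 10*s*(j*j) = s*(10*(j*j)) := by ring
        _ ≤ s*(3*s) := Nat.mul_le_mul_left _ h3s
        _ = 3*(s*s) := by ring
    have e2 : 16*j*C*s*(j*j) ≤ 4*(j*C*(s*s)) := by
      calc 16*j*C*s*(j*j) = (4*j*C*s)*(4*(j*j)) := by ring
        _ ≤ (4*j*C*s)*s := Nat.mul_le_mul_left _ hs4
        _ = 4*(j*C*(s*s)) := by ring
    linarith [e1, e2]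
  have hfinal : (n/s+1) * (s*s + A*((k-1)*(k-1)) + 2*(Nat.choose s k*(k-1))*(s*s)) ≤ A * n := by
    set X := s*s + A*((k-1)*(k-1)) + 2*(Nat.choose s k*(k-1))*(s*s) with hX
    have h1 : 2 * ((n/s+1) * X) = (n/s+1) * (2 * X) := by ring
    have h2 : (n/s+1) * (2*X) ≤ (n/s+1) * (A*s) := Nat.mul_le_mul_left _ h2X
    have h3 : (n/s+1) * (A*s) = A * ((n/s+1) * s) := by ring
    have h4 : A * ((n/s+1)*s) ≤ A * (2*n) := Nat.mul_le_mul_left _ hms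
    have h5 : A * (2*n) = 2 * (A*n) := by ring
    omega
  omega

def avoidF {k : ℕ} (π : Equiv.Perm (Fin k)) (n : ℕ) : Finset (SimpleGraph (Fin n)) :=
  Finset.univ.filter fun G => SplitFree π G

/-- encoding of intra-block edges -/
def psi1 {n : ℕ} (G : SimpleGraph (Fin n)) (u : Fin (n/2+1)) : Bool :=
  if h : 2*u.1+1 < n then
    (if G.Adj ⟨2*u.1, by omega⟩ ⟨2*u.1+1, h⟩ then true else false)
  else false

/-- encoding of inter-block edges -/
def psi2 {n : ℕ} (G : SimpleGraph (Fin n)) (q : Fin (n/2+1) × Fin (n/2+1))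
    (t1 t2 : Fin 2) : Bool :=
  if h : 2*q.1.1+t1.1 < n ∧ 2*q.2.1+t2.1 < n then
    (if G.Adj ⟨2*q.1.1+t1.1, h.1⟩ ⟨2*q.2.1+t2.1, h.2⟩ then true else false)
  else false

lemma bmap_two {n : ℕ} (a : Fin n) : (bmap 2 n a).1 = a.1/2 := rfl

lemma recon {n : ℕ} (G G' : SimpleGraph (Fin n))
    (h1 : ∀ u, psi1 G u = psi1 G' u)
    (h2 : ∀ q, q ∈ ep (bgraph 2 G) → ∀ t1 t2, psi2 G q t1 t2 = psi2 G' q t1 t2)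
    (hbg : bgraph 2 G = bgraph 2 G') :
    ∀ a b, G.Adj a b → G'.Adj a b := by
  -- first the case where the blocks are distinct and increasing
  have key : ∀ a b, G.Adj a b → bmap 2 n a < bmap 2 n b → G'.Adj a b := by
    intro a b hab hlt
    set u := bmap 2 n a with hu
    set v := bmap 2 n b with hv
    have hq : (u, v) ∈ ep (bgraph 2 G) := by
      rw [mem_ep]
      exact ⟨hlt, show u ≠ v ∧ ∃ a' b', G.Adj a' b' ∧ bmap 2 n a' = u ∧ bmap 2 n b' = v from ⟨ne_of_lt hlt, a, b, hab, rfl, rfl⟩⟩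
    have ht1 : 2*u.1 + a.1 % 2 = a.1 := by
      have := Nat.div_add_mod a.1 2
      have : u.1 = a.1/2 := bmap_two a
      omega
    have ht2 : 2*v.1 + b.1 % 2 = b.1 := by
      have := Nat.div_add_mod b.1 2
      have : v.1 = b.1/2 := bmap_two b
      omega
    have hcond : 2*u.1 + (⟨a.1 % 2, by omega⟩ : Fin 2).1 < n ∧
        2*v.1 + (⟨b.1 % 2, by omega⟩ : Fin 2).1 < n := by
      constructor
      · simpa [ht1] using a.2
      · simpa [ht2] using b.2
    have hGpsi : psi2 G (u, v) ⟨a.1 % 2, by omega⟩ ⟨b.1 % 2, by omega⟩ = true := by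
      rw [psi2, dif_pos hcond, if_pos]
      have ha : (⟨2*u.1 + (⟨a.1 % 2, by omega⟩ : Fin 2).1, hcond.1⟩ : Fin n) = a :=
        Fin.ext (by simpa using ht1)
      have hb : (⟨2*v.1 + (⟨b.1 % 2, by omega⟩ : Fin 2).1, hcond.2⟩ : Fin n) = b :=
        Fin.ext (by simpa using ht2)
      rw [ha, hb]
      exact hab
    rw [h2 _ hq] at hGpsi
    rw [psi2, dif_pos hcond] at hGpsi
    by_cases hadj' : G'.Adj ⟨2*u.1 + (⟨a.1 % 2, by omega⟩ : Fin 2).1, hcond.1⟩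
        ⟨2*v.1 + (⟨b.1 % 2, by omega⟩ : Fin 2).1, hcond.2⟩
    · have ha : (⟨2*u.1 + (⟨a.1 % 2, by omega⟩ : Fin 2).1, hcond.1⟩ : Fin n) = a :=
        Fin.ext (by simpa using ht1)
      have hb : (⟨2*v.1 + (⟨b.1 % 2, by omega⟩ : Fin 2).1, hcond.2⟩ : Fin n) = b :=
        Fin.ext (by simpa using ht2)
      rwa [ha, hb] at hadj'
    · rw [if_neg hadj'] at hGpsi
      exact absurd hGpsi (by simp)
  intro a b hab
  rcases lt_trichotomy (bmap 2 n a) (bmap 2 n b) with hlt | heq | hgt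
  · exact key a b hab hlt
  · -- same block
    have hne : a ≠ b := G.ne_of_adj hab
    have hdiv : a.1 / 2 = b.1 / 2 := by
      have := congrArg Fin.val heq
      simpa [bmap_two] using this
    have hda := Nat.div_add_mod a.1 2
    have hdb := Nat.div_add_mod b.1 2
    have hmod : a.1 % 2 < 2 := Nat.mod_lt _ (by omega)
    have hmodb : b.1 % 2 < 2 := Nat.mod_lt _ (by omega)
    have hvne : a.1 ≠ b.1 := fun h => hne (Fin.ext h)
    -- {a,b} = {2q, 2q+1}
    have hcases : (a.1 = 2*(a.1/2) ∧ b.1 = 2*(a.1/2)+1) ∨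
        (b.1 = 2*(a.1/2) ∧ a.1 = 2*(a.1/2)+1) := by omega
    set u := bmap 2 n a with hu
    have hu1 : u.1 = a.1/2 := bmap_two a
    have hqn : 2*(a.1/2)+1 < n := by
      have ha2 := a.2
      have hb2 := b.2
      rcases hcases with ⟨h1', h2'⟩ | ⟨h1', h2'⟩ <;> omega
    have hGA : G.Adj ⟨2*(a.1/2), by omega⟩ ⟨2*(a.1/2)+1, hqn⟩ := by
      rcases hcases with ⟨h1', h2'⟩ | ⟨h1', h2'⟩
      · have ha' : a = ⟨2*(a.1/2), by omega⟩ := Fin.ext h1'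
        have hb' : b = ⟨2*(a.1/2)+1, hqn⟩ := Fin.ext h2'
        rw [← ha', ← hb']
        exact hab
      · have hb' : b = ⟨2*(a.1/2), by omega⟩ := Fin.ext h1'
        have ha' : a = ⟨2*(a.1/2)+1, hqn⟩ := Fin.ext h2'
        rw [← hb', ← ha']
        exact G.adj_symm hab
    have hcond : 2*u.1+1 < n := by rw [hu1]; exact hqn
    have hpsi : psi1 G u = true := by
      rw [psi1, dif_pos hcond, if_pos]
      exact hGA
    rw [h1 u] at hpsi
    rw [psi1, dif_pos hcond] at hpsi
    have hGA' : G'.Adj ⟨2*(a.1/2), by omega⟩ ⟨2*(a.1/2)+1, hqn⟩ := by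
      by_cases hadj' : G'.Adj ⟨2*u.1, by omega⟩ ⟨2*u.1+1, hcond⟩
      · exact hadj'
      · rw [if_neg hadj'] at hpsi
        exact absurd hpsi (by simp)
    rcases hcases with ⟨h1', h2'⟩ | ⟨h1', h2'⟩
    · have ha' : a = ⟨2*(a.1/2), by omega⟩ := Fin.ext h1'
      have hb' : b = ⟨2*(a.1/2)+1, hqn⟩ := Fin.ext h2'
      rw [← ha', ← hb'] at hGA'
      exact hGA'
    · have hb' : b = ⟨2*(a.1/2), by omega⟩ := Fin.ext h1'
      have ha' : a = ⟨2*(a.1/2)+1, hqn⟩ := Fin.ext h2'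
      rw [← hb', ← ha'] at hGA'
      exact G'.adj_symm hGA'
  · have hab' := G.adj_symm hab
    have := key b a hab' hgt
    exact G'.adj_symm this

lemma fiber_card_le {k n : ℕ} (π : Equiv.Perm (Fin k)) (E : ℕ)
    (H : SimpleGraph (Fin (n/2+1))) (hE : (ep H).card ≤ E) :
    ((avoidF π n).filter fun G => bgraph 2 G = H).card ≤ 2^(n/2+1) * 16^E := by
  classical
  set fib2 := (avoidF π n).filter (fun G => bgraph 2 G = H) with hfib2
  have hinj : ∀ G ∈ fib2, ∀ G' ∈ fib2,
      ((fun u => psi1 G u, fun (q : {q // q ∈ ep H}) (t1 t2 : Fin 2) => psi2 G q.1 t1 t2) =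
       (fun u => psi1 G' u, fun (q : {q // q ∈ ep H}) (t1 t2 : Fin 2) => psi2 G' q.1 t1 t2))
      → G = G' := by
    intro G hG G' hG' heq
    rw [hfib2, mem_filter] at hG hG'
    have hbgG : bgraph 2 G = H := hG.2
    have hbgG' : bgraph 2 G' = H := hG'.2
    have heq1 := congrArg Prod.fst heq
    have heq2 := congrArg Prod.snd heq
    simp only at heq1 heq2
    have h1 : ∀ u, psi1 G u = psi1 G' u := fun u => congrFun heq1 u
    have h2 : ∀ q, q ∈ ep H → ∀ t1 t2, psi2 G q t1 t2 = psi2 G' q t1 t2 := by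
      intro q hq t1 t2
      have := congrFun heq2 ⟨q, hq⟩
      exact congrFun (congrFun this t1) t2
    ext a b
    constructor
    · exact fun h => recon G G' h1 (fun q hq => h2 q (by rwa [hbgG] at hq))
        (by rw [hbgG, hbgG']) a b h
    · exact fun h => recon G' G (fun u => (h1 u).symm)
        (fun q hq => fun t1 t2 => (h2 q (by rwa [hbgG'] at hq) t1 t2).symm)
        (by rw [hbgG, hbgG']) a b h
  have hcard : fib2.card ≤ Fintype.card
      ((Fin (n/2+1) → Bool) × ({q // q ∈ ep H} → Fin 2 → Fin 2 → Bool)) := by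
    rw [← Finset.card_univ]
    apply Finset.card_le_card_of_injOn
      (fun G => (fun u => psi1 G u, fun (q : {q // q ∈ ep H}) (t1 t2 : Fin 2) => psi2 G q.1 t1 t2))
      (fun G _ => mem_univ _)
    intro G hG G' hG' heq
    exact hinj G (by rwa [Finset.mem_coe] at hG) G' (by rwa [Finset.mem_coe] at hG') heq
  have hcard2 : Fintype.card
      ((Fin (n/2+1) → Bool) × ({q // q ∈ ep H} → Fin 2 → Fin 2 → Bool))
      = 2^(n/2+1) * 16^(ep H).card := by
    rw [Fintype.card_prod, Fintype.card_fun, Fintype.card_fun]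
    congr 1
    · simp
    · have h16 : Fintype.card (Fin 2 → Fin 2 → Bool) = 16 := by
        rw [Fintype.card_fun, Fintype.card_fun]
        simp
      rw [h16, Fintype.card_coe]
  calc fib2.card ≤ _ := hcard
    _ = 2^(n/2+1) * 16^(ep H).card := hcard2
    _ ≤ 2^(n/2+1) * 16^E := Nat.mul_le_mul_left _ (Nat.pow_le_pow_right (by omega) hE)

lemma card_simpleGraph_le (n : ℕ) : Fintype.card (SimpleGraph (Fin n)) ≤ 2^(n*n) := by
  classical
  have hinj : Function.Injective
      (fun (G : SimpleGraph (Fin n)) (a b : Fin n) => if G.Adj a b then true else false) := by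
    intro G G' heq
    ext a b
    have := congrFun (congrFun heq a) b
    by_cases h : G.Adj a b <;> by_cases h' : G'.Adj a b <;>
      simp [h, h'] at this ⊢
  calc Fintype.card (SimpleGraph (Fin n)) ≤ Fintype.card (Fin n → Fin n → Bool) :=
        Fintype.card_le_of_injective _ hinj
    _ = 2^(n*n) := by
        rw [Fintype.card_fun, Fintype.card_fun]
        simp [← pow_mul]

lemma avoid_card_le {k : ℕ} (π : Equiv.Perm (Fin k)) (hk : 0 < k) (A : ℕ)
    (hext : ∀ n (G : SimpleGraph (Fin n)), SplitFree π G → (ep G).card ≤ A * n) :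
    ∀ n, (avoidF π n).card ≤ ((2 * 16^A)^3)^n := by
  intro n
  induction n using Nat.strong_induction_on with
  | _ n IH =>
  have hE1 : (1:ℕ) ≤ 2 * 16^A := by
    calc (1:ℕ) ≤ 2*1 := by omega
      _ ≤ 2*16^A := Nat.mul_le_mul_left _ (Nat.one_le_pow _ _ (by omega))
  by_cases hn : n < 3
  · calc (avoidF π n).card ≤ Fintype.card (SimpleGraph (Fin n)) := by
          rw [← Finset.card_univ]; exact Finset.card_le_card (Finset.filter_subset _ _)
      _ ≤ 2^(n*n) := card_simpleGraph_le n
      _ ≤ 2^(3*n) := Nat.pow_le_pow_right (by omega) (by nlinarith)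
      _ = (2^3)^n := by rw [← pow_mul]
      _ ≤ ((2*16^A)^3)^n := by
          apply Nat.pow_le_pow_left
          apply Nat.pow_le_pow_left
          calc (2:ℕ) = 2*1 := by ring
            _ ≤ 2*16^A := Nat.mul_le_mul_left _ (Nat.one_le_pow _ _ (by omega))
  · push_neg at hn
    have hmlt : n/2+1 < n := by omega
    have hstep : (avoidF π n).card ≤
        (avoidF π (n/2+1)).card * (2^(n/2+1) * 16^(A*(n/2+1))) := by
      have hdecomp : (avoidF π n).card = ∑ H ∈ avoidF π (n/2+1),
          ((avoidF π n).filter fun G => bgraph 2 G = H).card := by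
        apply Finset.card_eq_sum_card_fiberwise
        intro G hG
        rw [avoidF, Finset.mem_coe, mem_filter] at hG ⊢
        exact ⟨mem_univ _, splitFree_bgraph hG.2⟩
      rw [hdecomp]
      calc ∑ H ∈ avoidF π (n/2+1), ((avoidF π n).filter fun G => bgraph 2 G = H).card
          ≤ (avoidF π (n/2+1)).card • (2^(n/2+1) * 16^(A*(n/2+1))) := by
            apply Finset.sum_le_card_nsmul
            intro H hH
            rw [avoidF, mem_filter] at hH
            exact fiber_card_le π _ H (hext _ H hH.2)
        _ = _ := by rw [smul_eq_mul]
    calc (avoidF π n).card ≤ (avoidF π (n/2+1)).card * (2^(n/2+1) * 16^(A*(n/2+1))) := hstep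
      _ ≤ ((2*16^A)^3)^(n/2+1) * (2^(n/2+1) * 16^(A*(n/2+1))) :=
          Nat.mul_le_mul_right _ (IH _ hmlt)
      _ = ((2*16^A)^3)^(n/2+1) * (2*16^A)^(n/2+1) := by
          rw [pow_mul, ← mul_pow]
      _ = (2*16^A)^(3*(n/2+1)) * (2*16^A)^(n/2+1) := by rw [pow_mul]
      _ = (2*16^A)^(3*(n/2+1) + (n/2+1)) := by rw [← pow_add]
      _ ≤ (2*16^A)^(3*n) := Nat.pow_le_pow_right (by omega) (by omega)
      _ = ((2*16^A)^3)^n := by rw [← pow_mul]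

lemma mem_P_cast (P : ∀ n : ℕ, Set (SimpleGraph (Fin n))) {a b : ℕ} (h : a = b)
    (Q : SimpleGraph (Fin a)) (hQ : Q ∈ P a) :
    SimpleGraph.comap (⇑(finCongr h).symm) Q ∈ P b := by
  subst h
  have hQ' : SimpleGraph.comap (⇑(finCongr rfl).symm) Q = Q := by
    ext x y
    simp [SimpleGraph.comap]
  rwa [hQ']

lemma copy_mem (P : ∀ n : ℕ, Set (SimpleGraph (Fin n)))
    (hhered : ∀ n : ℕ, ∀ G ∈ P n, ∀ U : Finset (Fin n), inducedOG G U ∈ P U.card)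
    {n k : ℕ} (π : Equiv.Perm (Fin k)) (G : SimpleGraph (Fin n)) (hG : G ∈ P n)
    (hdegG : ∀ v : Fin n, (G.neighborSet v).ncard ≤ 1)
    (L R : Fin k → Fin n) (hcopy : SplitCopy π G L R) :
    HpermGraph k π ∈ P (2*k) := by
  classical
  obtain ⟨hL, hR, hLR, hadj⟩ := hcopy
  have hLinj := hL.injective
  have hRinj := hR.injective
  have huniq : ∀ v a b : Fin n, G.Adj v a → G.Adj v b → a = b := by
    intro v a b ha hb
    exact (Set.ncard_le_one (Set.toFinite _)).mp (hdegG v) a ha b hb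
  set U := (Finset.image L univ) ∪ (Finset.image R univ) with hU
  have hdisj : Disjoint (Finset.image L univ) (Finset.image R univ) := by
    rw [Finset.disjoint_left]
    intro x hx hx'
    simp only [Finset.mem_image, mem_univ, true_and] at hx hx'
    obtain ⟨i, rfl⟩ := hx
    obtain ⟨j, hj⟩ := hx'
    exact absurd hj (ne_of_lt (hLR i j)).symm
  have hUcard : U.card = 2*k := by
    rw [hU, Finset.card_union_of_disjoint hdisj,
      Finset.card_image_of_injective _ hLinj, Finset.card_image_of_injective _ hRinj]
    simp [two_mul]
  set f : Fin (2*k) → Fin n := fun t =>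
    if h : t.1 < k then L ⟨t.1, h⟩ else R ⟨t.1 - k, by have := t.2; omega⟩ with hf
  have hfmono : StrictMono f := by
    intro t t' htt
    simp only [hf]
    by_cases h1 : t.1 < k <;> by_cases h2 : t'.1 < k
    · rw [dif_pos h1, dif_pos h2]
      exact hL (by simpa using htt)
    · rw [dif_pos h1, dif_neg h2]
      exact hLR _ _
    · exfalso
      have := Fin.lt_def.mp htt
      omega
    · rw [dif_neg h1, dif_neg h2]
      apply hR
      have ht := t.2
      have := Fin.lt_def.mp htt
      rw [Fin.lt_def]
      simp only
      omega
  have hfmem : ∀ t, f t ∈ U := by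
    intro t
    simp only [hf]
    by_cases h1 : t.1 < k
    · rw [dif_pos h1]
      exact Finset.mem_union_left _ (Finset.mem_image_of_mem _ (mem_univ _))
    · rw [dif_neg h1]
      exact Finset.mem_union_right _ (Finset.mem_image_of_mem _ (mem_univ _))
  have hfeq : f = ⇑(U.orderEmbOfFin hUcard) := Finset.orderEmbOfFin_unique hUcard hfmem hfmono
  -- identification of the embedding used in inducedOG
  have hg : ∀ x : Fin (2*k),
      U.orderEmbOfFin rfl ((finCongr hUcard).symm x) = f x := by
    have hgmono : StrictMono (fun i : Fin U.card => f (finCongr hUcard i)) := by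
      intro i j hij
      exact hfmono (by simpa using hij)
    have hgmem : ∀ i : Fin U.card, f (finCongr hUcard i) ∈ U := fun i => hfmem _
    have := Finset.orderEmbOfFin_unique (rfl : U.card = U.card) hgmem hgmono
    intro x
    calc U.orderEmbOfFin rfl ((finCongr hUcard).symm x)
        = f (finCongr hUcard ((finCongr hUcard).symm x)) := by rw [← this]
      _ = f x := by rw [Equiv.apply_symm_apply]
  -- the adjacency identification
  have hiff : ∀ x y : Fin (2*k), G.Adj (f x) (f y) ↔ (HpermGraph k π).Adj x y := by
    have hfinL : ∀ i : Fin k, f (finL k i) = L i := by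
      intro i
      simp only [hf]
      have : (finL k i).1 < k := i.2
      rw [dif_pos this]
      congr 1
    have hfinR : ∀ j : Fin k, f (finR k j) = R j := by
      intro j
      simp only [hf]
      have h2 : ¬ (finR k j).1 < k := by simp [finR]
      rw [dif_neg h2]
      congr 1
      simp [finR]
    intro x y
    constructor
    · intro hAdj
      have hxy : x ≠ y := by
        intro h
        rw [h] at hAdj
        exact G.loopless.irrefl _ hAdj
      rw [HpermGraph, SimpleGraph.fromEdgeSet_adj]
      refine ⟨?_, hxy⟩
      by_cases h1 : x.1 < k <;> by_cases h2 : y.1 < k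
      · -- both left: impossible
        exfalso
        have hx : f x = L ⟨x.1, h1⟩ := by simp only [hf]; rw [dif_pos h1]
        have hy : f y = L ⟨y.1, h2⟩ := by simp only [hf]; rw [dif_pos h2]
        rw [hx, hy] at hAdj
        have h3 := hadj ⟨x.1, h1⟩
        have := huniq _ _ _ hAdj h3
        exact absurd this (ne_of_lt (hLR _ _))
      · -- x left, y right
        have hx : f x = L ⟨x.1, h1⟩ := by simp only [hf]; rw [dif_pos h1]
        have hy : f y = R ⟨y.1 - k, by have := y.2; omega⟩ := by simp only [hf]; rw [dif_neg h2]
        rw [hx, hy] at hAdj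
        have h3 := hadj ⟨x.1, h1⟩
        have h4 := huniq _ _ _ hAdj h3
        have h5 : (⟨y.1 - k, by have := y.2; omega⟩ : Fin k) = π ⟨x.1, h1⟩ := hRinj h4
        refine ⟨⟨x.1, h1⟩, ?_⟩
        have hxx : x = finL k ⟨x.1, h1⟩ := Fin.ext rfl
        have hyy : y = finR k (π ⟨x.1, h1⟩) := by
          rw [← h5]
          apply Fin.ext
          simp [finR]
          omega
        rw [← hxx, ← hyy]
      · -- x right, y left
        have hx : f x = R ⟨x.1 - k, by have := x.2; omega⟩ := by simp only [hf]; rw [dif_neg h1]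
        have hy : f y = L ⟨y.1, h2⟩ := by simp only [hf]; rw [dif_pos h2]
        rw [hx, hy] at hAdj
        have h3 := hadj ⟨y.1, h2⟩
        have h4 := huniq _ _ _ (G.adj_symm hAdj) h3
        have h5 : (⟨x.1 - k, by have := x.2; omega⟩ : Fin k) = π ⟨y.1, h2⟩ := hRinj h4
        refine ⟨⟨y.1, h2⟩, ?_⟩
        have hyy : y = finL k ⟨y.1, h2⟩ := Fin.ext rfl
        have hxx : x = finR k (π ⟨y.1, h2⟩) := by
          rw [← h5]
          apply Fin.ext
          simp [finR]
          omega
        rw [← hxx, ← hyy]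
        rw [Sym2.eq_swap]
      · -- both right: impossible
        exfalso
        have hxk : x.1 - k < k := by have := x.2; omega
        have hyk : y.1 - k < k := by have := y.2; omega
        have hx : f x = R ⟨x.1 - k, hxk⟩ := by simp only [hf]; rw [dif_neg h1]
        have hy : f y = R ⟨y.1 - k, hyk⟩ := by simp only [hf]; rw [dif_neg h2]
        rw [hx, hy] at hAdj
        have h3 : G.Adj (L (π.symm ⟨x.1 - k, hxk⟩)) (R ⟨x.1 - k, hxk⟩) := by
          have h3' := hadj (π.symm ⟨x.1 - k, hxk⟩)
          rwa [Equiv.apply_symm_apply] at h3'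
        have h4 := huniq _ _ _ hAdj (G.adj_symm h3)
        exact absurd h4 (ne_of_gt (hLR _ _))
    · intro hAdj
      rw [HpermGraph, SimpleGraph.fromEdgeSet_adj] at hAdj
      obtain ⟨⟨i, hi⟩, _⟩ := hAdj
      rw [Sym2.eq_iff] at hi
      rcases hi with ⟨hx, hy⟩ | ⟨hx, hy⟩
      · rw [hx, hy, hfinL, hfinR]
        exact hadj i
      · rw [hx, hy, hfinL, hfinR]
        exact G.adj_symm (hadj i)
  -- conclude
  have hmem := hhered n G hG U
  have hmem2 := mem_P_cast P hUcard (inducedOG G U) hmem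
  have hfinal : SimpleGraph.comap (⇑(finCongr hUcard).symm) (inducedOG G U)
      = HpermGraph k π := by
    ext x y
    rw [SimpleGraph.comap_adj]
    rw [inducedOG, SimpleGraph.comap_adj]
    rw [hg x, hg y]
    exact hiff x y
  rwa [hfinal] at hmem2

lemma part1 (P : ∀ n : ℕ, Set (SimpleGraph (Fin n)))
    (hhered : ∀ n : ℕ, ∀ G ∈ P n, ∀ U : Finset (Fin n), inducedOG G U ∈ P U.card)
    (hdeg : ∀ n : ℕ, ∀ G ∈ P n, ∀ v : Fin n, (G.neighborSet v).ncard ≤ 1)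
    (hspeed : ∀ c : ℝ, 0 < c → ∃ N : ℕ, c ^ N < ((P N).ncard : ℝ)) :
    ∀ (k : ℕ) (π : Equiv.Perm (Fin k)), HpermGraph k π ∈ P (2 * k) := by
  intro k π
  by_contra hH
  have hfree : ∀ n, ∀ G ∈ P n, SplitFree π G := by
    intro n G hG L R hcopy
    exact hH (copy_mem P hhered π G hG (hdeg n G hG) L R hcopy)
  rcases Nat.eq_zero_or_pos k with hk0 | hk
  · subst hk0
    obtain ⟨N, hN⟩ := hspeed 1 one_pos
    have hne : (P N).Nonempty := by
      rw [Set.nonempty_iff_ne_empty]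
      intro h
      rw [h] at hN
      norm_num at hN
    obtain ⟨G, hG⟩ := hne
    exact hfree N G hG (fun i => i.elim0) (fun i => i.elim0)
      ⟨fun i => i.elim0, fun i => i.elim0, fun i => i.elim0, fun i => i.elim0⟩
  · set s := 4 * k^2 with hs
    set A := 5 * s + 8 * (k - 1) * (Nat.choose s k) * s with hA
    have hext := extremal π hk s A rfl rfl
    have hB := avoid_card_le π hk A hext
    set B := (2 * 16^A)^3 with hBdef
    have hBpos : 0 < B := by positivity
    obtain ⟨N, hN⟩ := hspeed (B : ℝ) (by exact_mod_cast hBpos)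
    have hsub : P N ⊆ ↑(avoidF π N) := by
      intro G hG
      rw [Finset.mem_coe, avoidF, mem_filter]
      exact ⟨mem_univ _, hfree N G hG⟩
    have h1 : (P N).ncard ≤ (avoidF π N).card := by
      rw [← Set.ncard_coe_finset]
      exact Set.ncard_le_ncard hsub (Finset.finite_toSet _)
    have h2 : (P N).ncard ≤ B^N := le_trans h1 (hB N)
    have h3 : ((P N).ncard : ℝ) ≤ (B:ℝ)^N := by exact_mod_cast h2
    linarith

/-- The split matching on `U` with pattern `π`, with all other vertices isolated. -/
def targ (n k : ℕ) (U : Finset (Fin n)) (h : U.card = 2*k) (π : Equiv.Perm (Fin k)) :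
    SimpleGraph (Fin n) :=
  SimpleGraph.fromEdgeSet {e | ∃ i : Fin k,
    e = s(U.orderEmbOfFin h ⟨i.1, by have := i.isLt; omega⟩,
          U.orderEmbOfFin h ⟨k + (π i).1, by have := (π i).isLt; omega⟩)}

lemma targ_adj {n k : ℕ} {U : Finset (Fin n)} {h : U.card = 2*k} {π : Equiv.Perm (Fin k)}
    {a b : Fin n} :
    (targ n k U h π).Adj a b ↔ ∃ i : Fin k,
      (a = U.orderEmbOfFin h ⟨i.1, by have := i.isLt; omega⟩ ∧
       b = U.orderEmbOfFin h ⟨k + (π i).1, by have := (π i).isLt; omega⟩) ∨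
      (a = U.orderEmbOfFin h ⟨k + (π i).1, by have := (π i).isLt; omega⟩ ∧
       b = U.orderEmbOfFin h ⟨i.1, by have := i.isLt; omega⟩) := by
  rw [targ, SimpleGraph.fromEdgeSet_adj]
  constructor
  · rintro ⟨⟨i, hi⟩, hne⟩
    rw [Sym2.eq_iff] at hi
    exact ⟨i, hi⟩
  · rintro ⟨i, hi⟩
    have hne : a ≠ b := by
      rcases hi with ⟨ha, hb⟩ | ⟨ha, hb⟩
      · rw [ha, hb]
        intro hcon
        have h2 := congrArg Fin.val ((U.orderEmbOfFin h).injective hcon)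
        simp only at h2
        have := i.isLt
        omega
      · rw [ha, hb]
        intro hcon
        have h2 := congrArg Fin.val ((U.orderEmbOfFin h).injective hcon)
        simp only at h2
        have := i.isLt
        omega
    refine ⟨⟨i, ?_⟩, hne⟩
    rw [Sym2.eq_iff]
    exact hi

lemma targ_support {n k : ℕ} {U : Finset (Fin n)} {h : U.card = 2*k} {π : Equiv.Perm (Fin k)}
    {a : Fin n} : (∃ b, (targ n k U h π).Adj a b) ↔ a ∈ U := by
  constructor
  · rintro ⟨b, hab⟩
    rw [targ_adj] at hab
    rcases hab with ⟨i, ⟨ha, _⟩ | ⟨ha, _⟩⟩ <;>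
      (rw [ha]; exact U.orderEmbOfFin_mem h _)
  · intro ha
    set t := (U.orderIsoOfFin h).symm ⟨a, ha⟩ with ht
    have hiso : (U.orderIsoOfFin h) t = ⟨a, ha⟩ := by
      rw [ht]; exact (U.orderIsoOfFin h).apply_symm_apply _
    have hat : a = U.orderEmbOfFin h t := by
      rw [← Finset.coe_orderIsoOfFin_apply, hiso]
    by_cases htk : t.1 < k
    · refine ⟨U.orderEmbOfFin h ⟨k + (π ⟨t.1, htk⟩).1, by have := (π ⟨t.1, htk⟩).isLt; omega⟩, ?_⟩
      rw [targ_adj]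
      exact ⟨⟨t.1, htk⟩, Or.inl ⟨by rw [hat], rfl⟩⟩
    · have htk2 : t.1 - k < k := by have := t.isLt; omega
      set j : Fin k := ⟨t.1 - k, htk2⟩ with hj
      set i := π.symm j with hi
      refine ⟨U.orderEmbOfFin h ⟨i.1, by have := i.isLt; omega⟩, ?_⟩
      rw [targ_adj]
      refine ⟨i, Or.inr ⟨?_, rfl⟩⟩
      rw [hat]
      congr 1
      apply Fin.ext
      have hpij : π i = j := by rw [hi]; exact π.apply_symm_apply j
      have hj1 : (π i).1 = t.1 - k := by rw [hpij]
      simp only [hj1]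
      omega


/-- pairing involution on `Fin (2k)` induced by `π`. -/
def prFun (k : ℕ) (π : Equiv.Perm (Fin k)) (t : Fin (2*k)) : Fin (2*k) :=
  if ht : t.1 < k then ⟨k + (π ⟨t.1, ht⟩).1, by have := (π ⟨t.1, ht⟩).isLt; omega⟩
  else ⟨(π.symm ⟨t.1 - k, by have := t.isLt; omega⟩).1,
    by have := (π.symm ⟨t.1 - k, by have := t.isLt; omega⟩).isLt; omega⟩

lemma prFun_lt {k : ℕ} (π : Equiv.Perm (Fin k)) (t : Fin (2*k)) (ht : t.1 < k) :
    prFun k π t = ⟨k + (π ⟨t.1, ht⟩).1, by have := (π ⟨t.1, ht⟩).isLt; omega⟩ := by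
  unfold prFun
  rw [dif_pos ht]

lemma prFun_ge {k : ℕ} (π : Equiv.Perm (Fin k)) (t : Fin (2*k)) (ht : ¬ t.1 < k) :
    prFun k π t = ⟨(π.symm ⟨t.1 - k, by have := t.isLt; omega⟩).1,
      by have := (π.symm ⟨t.1 - k, by have := t.isLt; omega⟩).isLt; omega⟩ := by
  unfold prFun
  rw [dif_neg ht]

lemma prFun_invol {k : ℕ} (π : Equiv.Perm (Fin k)) : Function.Involutive (prFun k π) := by
  intro t
  by_cases ht : t.1 < k
  · rw [prFun_lt π t ht]
    have h2 : ¬ ((⟨k + (π ⟨t.1, ht⟩).1, by have := (π ⟨t.1, ht⟩).isLt; omega⟩ : Fin (2*k)).1 < k) := by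
      simp only
      omega
    rw [prFun_ge π _ h2]
    apply Fin.ext
    simp only
    have he : (⟨k + (π ⟨t.1, ht⟩).1 - k, by have := (π ⟨t.1, ht⟩).isLt; omega⟩ : Fin k)
        = π ⟨t.1, ht⟩ := Fin.ext (by simp only; omega)
    rw [he, Equiv.symm_apply_apply]
  · rw [prFun_ge π t ht]
    have h2 : ((⟨(π.symm ⟨t.1 - k, by have := t.isLt; omega⟩).1,
        by have := (π.symm ⟨t.1 - k, by have := t.isLt; omega⟩).isLt; omega⟩ : Fin (2*k)).1 < k) :=
      (π.symm _).isLt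
    rw [prFun_lt π _ h2]
    apply Fin.ext
    simp only
    have he : (⟨(π.symm ⟨t.1 - k, by have := t.isLt; omega⟩).1, h2⟩ : Fin k)
        = π.symm ⟨t.1 - k, by have := t.isLt; omega⟩ := Fin.ext rfl
    rw [he, Equiv.apply_symm_apply]
    have := t.isLt
    simp only
    omega

/-- the vertex involution swapping matched pairs of `U`. -/
def fsig {n k : ℕ} (U : Finset (Fin n)) (h : U.card = 2*k) (π : Equiv.Perm (Fin k))
    (x : Fin n) : Fin n :=
  if hx : x ∈ U then U.orderEmbOfFin h (prFun k π ((U.orderIsoOfFin h).symm ⟨x, hx⟩)) else x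

lemma idx_ue {n k : ℕ} (U : Finset (Fin n)) (h : U.card = 2*k) (s : Fin (2*k))
    (hm : U.orderEmbOfFin h s ∈ U) :
    (U.orderIsoOfFin h).symm ⟨U.orderEmbOfFin h s, hm⟩ = s := by
  have h1 : (U.orderIsoOfFin h) s = ⟨U.orderEmbOfFin h s, hm⟩ :=
    Subtype.ext (Finset.coe_orderIsoOfFin_apply U h s)
  rw [← h1, OrderIso.symm_apply_apply]

lemma fsig_ue {n k : ℕ} (U : Finset (Fin n)) (h : U.card = 2*k) (π : Equiv.Perm (Fin k))
    (s : Fin (2*k)) :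
    fsig U h π (U.orderEmbOfFin h s) = U.orderEmbOfFin h (prFun k π s) := by
  unfold fsig
  rw [dif_pos (U.orderEmbOfFin_mem h s), idx_ue U h s]

lemma fsig_not_mem {n k : ℕ} (U : Finset (Fin n)) (h : U.card = 2*k)
    (π : Equiv.Perm (Fin k)) (x : Fin n) (hx : x ∉ U) : fsig U h π x = x := by
  unfold fsig
  rw [dif_neg hx]

lemma fsig_invol {n k : ℕ} (U : Finset (Fin n)) (h : U.card = 2*k)
    (π : Equiv.Perm (Fin k)) : Function.Involutive (fsig U h π) := by
  intro x
  by_cases hx : x ∈ U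
  · have hiso : (U.orderIsoOfFin h) ((U.orderIsoOfFin h).symm ⟨x, hx⟩) = ⟨x, hx⟩ :=
      (U.orderIsoOfFin h).apply_symm_apply _
    have hxt : x = U.orderEmbOfFin h ((U.orderIsoOfFin h).symm ⟨x, hx⟩) := by
      rw [← Finset.coe_orderIsoOfFin_apply, hiso]
    rw [hxt, fsig_ue, fsig_ue, prFun_invol, ← hxt]
  · rw [fsig_not_mem U h π x hx, fsig_not_mem U h π x hx]

/-- the vertex embedding `[n] → [2n]` splitting at `c`. -/
def gFun (n c : ℕ) (p : Fin n) : Fin (2*n) :=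
  if p.1 < c then ⟨p.1, by have := p.isLt; omega⟩ else ⟨n + p.1, by have := p.isLt; omega⟩

lemma gFun_lt {n c : ℕ} (p : Fin n) (hp : p.1 < c) :
    gFun n c p = ⟨p.1, by have := p.isLt; omega⟩ := if_pos hp

lemma gFun_ge {n c : ℕ} (p : Fin n) (hp : ¬ p.1 < c) :
    gFun n c p = ⟨n + p.1, by have := p.isLt; omega⟩ := if_neg hp

lemma gFun_mono {n c : ℕ} : StrictMono (gFun n c) := by
  intro p q hpq
  have hpq' := Fin.lt_def.mp hpq
  by_cases h1 : p.1 < c <;> by_cases h2 : q.1 < c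
  · rw [gFun_lt p h1, gFun_lt q h2]; exact Fin.mk_lt_mk.mpr hpq'
  · rw [gFun_lt p h1, gFun_ge q h2]
    apply Fin.mk_lt_mk.mpr
    have := p.isLt
    omega
  · omega
  · rw [gFun_ge p h1, gFun_ge q h2]
    apply Fin.mk_lt_mk.mpr
    omega

lemma targ_mem (P : ∀ n : ℕ, Set (SimpleGraph (Fin n)))
    (hhered : ∀ n : ℕ, ∀ G ∈ P n, ∀ U : Finset (Fin n), inducedOG G U ∈ P U.card)
    (hHmem : ∀ (m : ℕ) (σ : Equiv.Perm (Fin m)), HpermGraph m σ ∈ P (2 * m))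
    {n k : ℕ} (U : Finset (Fin n)) (h : U.card = 2*k) (π : Equiv.Perm (Fin k)) :
    targ n k U h π ∈ P n := by
  classical
  set c : ℕ := if hk : 0 < k then (U.orderEmbOfFin h ⟨k-1, by omega⟩).1 + 1 else 0 with hc
  have hcL : ∀ t : Fin (2*k), t.1 < k → (U.orderEmbOfFin h t).1 < c := by
    intro t ht
    have hk : 0 < k := by omega
    rw [hc, dif_pos hk]
    have h1 : U.orderEmbOfFin h t ≤ U.orderEmbOfFin h ⟨k-1, by omega⟩ := by
      apply (U.orderEmbOfFin h).monotone
      rw [Fin.le_def]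
      simp only
      omega
    have := Fin.le_def.mp h1
    omega
  have hcR : ∀ t : Fin (2*k), k ≤ t.1 → c ≤ (U.orderEmbOfFin h t).1 := by
    intro t ht
    have hk : 0 < k := by have := t.isLt; omega
    rw [hc, dif_pos hk]
    have h1 : U.orderEmbOfFin h ⟨k-1, by omega⟩ < U.orderEmbOfFin h t := by
      apply (U.orderEmbOfFin h).strictMono
      rw [Fin.lt_def]
      simp only
      omega
    have := Fin.lt_def.mp h1
    omega
  set σ : Equiv.Perm (Fin n) := (fsig_invol U h π).toPerm with hσ
  have hσ_apply : ∀ x, σ x = fsig U h π x := fun x => rfl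
  set U' : Finset (Fin (2*n)) := Finset.image (gFun n c) univ with hU'
  have hU'card : U'.card = n := by
    rw [hU', Finset.card_image_of_injective _ gFun_mono.injective, Finset.card_univ,
      Fintype.card_fin]
  have hemb : ∀ x : Fin n, U'.orderEmbOfFin rfl ((finCongr hU'card).symm x) = gFun n c x := by
    have hgmem : ∀ i : Fin U'.card, gFun n c (finCongr hU'card i) ∈ U' := by
      intro i
      exact Finset.mem_image_of_mem _ (mem_univ _)
    have hgm : StrictMono (fun i : Fin U'.card => gFun n c (finCongr hU'card i)) := by
      intro i j hij
      exact gFun_mono (by simpa using hij)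
    have huniq := Finset.orderEmbOfFin_unique (rfl : U'.card = U'.card) hgmem hgm
    intro x
    calc U'.orderEmbOfFin rfl ((finCongr hU'card).symm x)
        = gFun n c (finCongr hU'card ((finCongr hU'card).symm x)) := by rw [← huniq]
      _ = gFun n c x := by rw [Equiv.apply_symm_apply]
  -- forward helper
  have helper2 : ∀ (a b : Fin n) (i : Fin k),
      a = U.orderEmbOfFin h ⟨i.1, by have := i.isLt; omega⟩ →
      b = U.orderEmbOfFin h ⟨k + (π i).1, by have := (π i).isLt; omega⟩ →
      (HpermGraph n σ).Adj (gFun n c a) (gFun n c b) := by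
    intro a b i ha hb
    have hac : a.1 < c := by rw [ha]; exact hcL _ i.isLt
    have hbc : ¬ b.1 < c := by
      rw [hb]
      have := hcR ⟨k + (π i).1, by have := (π i).isLt; omega⟩ (by simp only; omega)
      omega
    have hσab : σ a = b := by
      rw [hσ_apply, ha, fsig_ue, prFun_lt π _ (show (⟨i.1, by have := i.isLt; omega⟩ :
        Fin (2*k)).1 < k from i.isLt), ← hb]
    have hga : gFun n c a = finL n a := by rw [gFun_lt a hac]; exact Fin.ext rfl
    have hgb : gFun n c b = finR n b := by rw [gFun_ge b hbc]; exact Fin.ext rfl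
    rw [HpermGraph, SimpleGraph.fromEdgeSet_adj]
    constructor
    · exact ⟨a, by rw [hga, hgb, hσab]⟩
    · rw [hga, hgb]
      intro hcon
      have := congrArg Fin.val hcon
      simp only [finL, finR] at this
      have := b.isLt
      omega
  -- backward helper
  have helper1 : ∀ (a b : Fin n) (i : Fin n),
      gFun n c a = finL n i → gFun n c b = finR n (σ i) → (targ n k U h π).Adj a b := by
    intro a b i hga hgb
    have hvla := congrArg Fin.val hga
    have hvlb := congrArg Fin.val hgb
    simp only [finL, finR] at hvla hvlb
    by_cases hac : a.1 < c
    case neg =>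
      rw [gFun_ge a hac] at hvla
      simp only at hvla
      have := i.isLt
      omega
    rw [gFun_lt a hac] at hvla
    simp only at hvla
    have hai : a = i := Fin.ext hvla
    by_cases hbc : b.1 < c
    case pos =>
      rw [gFun_lt b hbc] at hvlb
      simp only at hvlb
      have := (σ i).isLt
      have := b.isLt
      omega
    rw [gFun_ge b hbc] at hvlb
    simp only at hvlb
    have hσb : σ i = b := Fin.ext (by omega)
    subst hai
    have haU : a ∈ U := by
      by_contra haU
      have h1 : σ a = a := by rw [hσ_apply, fsig_not_mem U h π a haU]
      rw [h1] at hσb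
      rw [← hσb] at hbc
      exact hbc hac
    have hiso : (U.orderIsoOfFin h) ((U.orderIsoOfFin h).symm ⟨a, haU⟩) = ⟨a, haU⟩ :=
      (U.orderIsoOfFin h).apply_symm_apply _
    have hat : a = U.orderEmbOfFin h ((U.orderIsoOfFin h).symm ⟨a, haU⟩) := by
      rw [← Finset.coe_orderIsoOfFin_apply, hiso]
    set t := (U.orderIsoOfFin h).symm ⟨a, haU⟩ with htdef
    have htk : t.1 < k := by
      by_contra htk
      have := hcR t (by omega)
      rw [← hat] at this
      omega
    have hb2 : b = U.orderEmbOfFin h (prFun k π t) := by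
      rw [← hσb, hσ_apply, hat, fsig_ue]
    rw [targ_adj]
    refine ⟨⟨t.1, htk⟩, Or.inl ⟨by rw [hat], ?_⟩⟩
    rw [hb2, prFun_lt π t htk]
  -- the graph identity
  have key : SimpleGraph.comap (⇑(finCongr hU'card).symm) (inducedOG (HpermGraph n σ) U')
      = targ n k U h π := by
    ext a b
    rw [SimpleGraph.comap_adj, inducedOG, SimpleGraph.comap_adj, hemb a, hemb b]
    constructor
    · intro hAdj
      rw [HpermGraph, SimpleGraph.fromEdgeSet_adj] at hAdj
      obtain ⟨⟨i, hi⟩, hne⟩ := hAdj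
      rw [Sym2.eq_iff] at hi
      rcases hi with ⟨hx, hy⟩ | ⟨hx, hy⟩
      · exact helper1 a b i hx hy
      · exact (targ n k U h π).adj_symm (helper1 b a i hy hx)
    · intro hAdj
      rw [targ_adj] at hAdj
      obtain ⟨i, ⟨ha, hb⟩ | ⟨ha, hb⟩⟩ := hAdj
      · exact helper2 a b i ha hb
      · exact (HpermGraph n σ).adj_symm (helper2 b a i hb ha)
  -- conclude
  have h1 := hHmem n σ
  have h2 := hhered _ _ h1 U'
  have h3 := mem_P_cast P hU'card _ h2
  rwa [key] at h3

lemma targ_inj {n k k' : ℕ} {U U' : Finset (Fin n)} {π : Equiv.Perm (Fin k)}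
    {π' : Equiv.Perm (Fin k')} (h : U.card = 2*k) (h' : U'.card = 2*k')
    (heq : targ n k U h π = targ n k' U' h' π') :
    k = k' ∧ U = U' ∧ HEq π π' := by
  have hU : U = U' := by
    ext a
    rw [← targ_support (h := h) (π := π), ← targ_support (h := h') (π := π'), heq]
  have hk : k = k' := by
    rw [hU] at h
    omega
  subst hk
  subst hU
  have hE : h' = h := Subsingleton.elim h' h
  subst hE
  refine ⟨rfl, rfl, ?_⟩
  have hππ : π = π' := by
    ext i
    have hedge : (targ n k U h' π).Adj (U.orderEmbOfFin h' ⟨i.1, by have := i.isLt; omega⟩)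
        (U.orderEmbOfFin h' ⟨k + (π i).1, by have := (π i).isLt; omega⟩) := by
      rw [targ_adj]
      exact ⟨i, Or.inl ⟨rfl, rfl⟩⟩
    rw [heq] at hedge
    rw [targ_adj] at hedge
    obtain ⟨j, ⟨ha, hb⟩ | ⟨ha, hb⟩⟩ := hedge
    · have h1 : i.1 = j.1 := Fin.mk_eq_mk.mp ((U.orderEmbOfFin h').injective ha)
      have h2 : k + (π i).1 = k + (π' j).1 :=
        Fin.mk_eq_mk.mp ((U.orderEmbOfFin h').injective hb)
      have hji : j = i := Fin.ext h1.symm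
      subst hji
      omega
    · have h1 : i.1 = k + (π' j).1 := Fin.mk_eq_mk.mp ((U.orderEmbOfFin h').injective ha)
      have := i.isLt
      omega
  rw [hππ]

lemma part2 (P : ∀ n : ℕ, Set (SimpleGraph (Fin n)))
    (hhered : ∀ n : ℕ, ∀ G ∈ P n, ∀ U : Finset (Fin n), inducedOG G U ∈ P U.card)
    (hHmem : ∀ (m : ℕ) (σ : Equiv.Perm (Fin m)), HpermGraph m σ ∈ P (2 * m)) :
    ∀ n : ℕ, ∑ k ∈ Finset.range (n / 2 + 1), n.choose (2 * k) * k.factorial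
      ≤ (P n).ncard := by
  intro n
  classical
  set I := (Finset.range (n/2+1)).sigma
    (fun k => (Finset.powersetCard (2*k) (univ : Finset (Fin n)))
      ×ˢ (univ : Finset (Equiv.Perm (Fin k)))) with hI
  have hcardI : ∀ x ∈ I, x.2.1.card = 2 * x.1 := by
    intro x hx
    rw [hI, Finset.mem_sigma] at hx
    have := hx.2
    rw [Finset.mem_product] at this
    exact (Finset.mem_powersetCard.mp this.1).2
  set Φ : ((k : ℕ) × (Finset (Fin n) × Equiv.Perm (Fin k))) → SimpleGraph (Fin n) :=
    fun x => if hx : x.2.1.card = 2 * x.1 then targ n x.1 x.2.1 hx x.2.2 else ⊥ with hΦ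
  have hsub : ∀ x ∈ I, Φ x ∈ P n := by
    intro x hx
    rw [hΦ]
    simp only
    rw [dif_pos (hcardI x hx)]
    exact targ_mem P hhered hHmem _ _ _
  have hinj : Set.InjOn Φ ↑I := by
    intro x hx y hy hxy
    rw [Finset.mem_coe] at hx hy
    have hcx := hcardI x hx
    have hcy := hcardI y hy
    rw [hΦ] at hxy
    simp only at hxy
    rw [dif_pos hcx, dif_pos hcy] at hxy
    obtain ⟨hk, hU, hπ⟩ := targ_inj hcx hcy hxy
    obtain ⟨kx, Ux, πx⟩ := x
    obtain ⟨ky, Uy, πy⟩ := y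
    simp only at hk hU hπ
    subst hk
    subst hU
    rw [eq_of_heq hπ]
  have h3 : (I.image Φ).card = I.card := Finset.card_image_of_injOn hinj
  have h2 : (I.image Φ).card ≤ (P n).ncard := by
    rw [← Set.ncard_coe_finset]
    apply Set.ncard_le_ncard _ (Set.toFinite _)
    intro G hG
    rw [Finset.mem_coe, Finset.mem_image] at hG
    obtain ⟨x, hx, rfl⟩ := hG
    exact hsub x hx
  have h4 : I.card = ∑ k ∈ Finset.range (n/2+1), n.choose (2*k) * k.factorial := by
    rw [hI, Finset.card_sigma]
    apply Finset.sum_congr rfl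
    intro k _
    rw [Finset.card_product, Finset.card_powersetCard, Finset.card_univ, Finset.card_univ,
      Fintype.card_fin, Fintype.card_perm, Fintype.card_fin]
  omega

theorem stmt6 (P : ∀ n : ℕ, Set (SimpleGraph (Fin n)))
    -- `P` is hereditary
    (hhered : ∀ n : ℕ, ∀ G ∈ P n, ∀ U : Finset (Fin n), inducedOG G U ∈ P U.card)
    -- every graph in `P` has maximum degree at most 1
    (hdeg : ∀ n : ℕ, ∀ G ∈ P n, ∀ v : Fin n, (G.neighborSet v).ncard ≤ 1)
    -- for every constant `c > 0` there is `N` with `|P_N| > c^N`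
    (hspeed : ∀ c : ℝ, 0 < c → ∃ N : ℕ, c ^ N < ((P N).ncard : ℝ)) :
    (∀ (k : ℕ) (π : Equiv.Perm (Fin k)), HpermGraph k π ∈ P (2 * k)) ∧
    (∀ n : ℕ, ∑ k ∈ Finset.range (n / 2 + 1), n.choose (2 * k) * k.factorial ≤ (P n).ncard) := by
  have hH := part1 P hhered hdeg hspeed
  exact ⟨hH, part2 P hhered hH⟩
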